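/- Let Φ_x^1, ..., Φ_x^N ∈ ℝ^{n×n} and Φ_u^1, ..., Φ_u^N ∈ ℝ^{m×n} satisfy Φ_x^1 = I and Φ_x^{i+1} = A Φ_x^i + B Φ_u^i for i = 1,...,N-1. Define the block-lower-triangular Toeplitz matrices 𝚽_x and 𝚽_u with (i,j)-blocks Φ_x^{i-j+1} and Φ_u^{i-j+1} for i ≥ j (zero otherwise). Then [I - ZA, -ZB] [𝚽_x; 𝚽_u] = I, where ZA and ZB are block-lower-shift matrices with A and B on the first subdiagonal, respectively. -/

import Mathlib

open Matrix

/-- Block-lower-shift matrix: the `(i+1,i)` block equals `A`, all other blocks are zero. -/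
def blockShift {N n m : ℕ} (A : Matrix (Fin n) (Fin m) ℝ) :
    Matrix (Fin N × Fin n) (Fin N × Fin m) ℝ :=
  fun p q => if p.1.val = q.1.val + 1 then A p.2 q.2 else 0

/-- Block-lower-triangular Toeplitz matrix with `(i,j)`-block `Φ (i-j+1)` for `j ≤ i`. -/
def blockToeplitz {N n m : ℕ} (Φ : ℕ → Matrix (Fin n) (Fin m) ℝ) :
    Matrix (Fin N × Fin n) (Fin N × Fin m) ℝ :=
  fun p q => if q.1.val ≤ p.1.val then Φ (p.1.val - q.1.val + 1) p.2 q.2 else 0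

lemma shift_mul_toeplitz {N n m l : ℕ} (A : Matrix (Fin n) (Fin m) ℝ)
    (Φ : ℕ → Matrix (Fin m) (Fin l) ℝ) (i j : Fin N) (p : Fin n) (q : Fin l) :
    (blockShift (N := N) A * blockToeplitz (N := N) Φ) (i, p) (j, q) =
      if j.val + 1 ≤ i.val then (A * Φ (i.val - j.val)) p q else 0 := by
  simp only [Matrix.mul_apply, blockShift, blockToeplitz, Fintype.sum_prod_type,
    ite_mul, zero_mul, mul_ite, mul_zero]
  by_cases h : j.val + 1 ≤ i.val
  · rw [if_pos h]
    have hi : i.val - 1 < N := by omega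
    rw [Finset.sum_eq_single (⟨i.val - 1, hi⟩ : Fin N)]
    · simp only [Matrix.mul_apply]
      apply Finset.sum_congr rfl
      intro r _
      rw [if_pos (show (j.val : ℕ) ≤ i.val - 1 by omega), if_pos (show i.val = (i.val - 1) + 1 by omega)]
      congr 2
      omega
    · intro k _ hk
      apply Finset.sum_eq_zero
      intro r _
      by_cases hik : i.val = k.val + 1
      · exact absurd (Fin.ext (show k.val = i.val - 1 by omega)) hk
      · simp [hik]
    · intro h'; exact absurd (Finset.mem_univ _) h'
  · rw [if_neg h]
    apply Finset.sum_eq_zero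
    intro k _
    apply Finset.sum_eq_zero
    intro r _
    by_cases hik : i.val = k.val + 1
    · rw [if_neg (by omega)]
    · simp [hik]

theorem slp_recursion_iff_affine_constraint
    {N n m : ℕ} (A : Matrix (Fin n) (Fin n) ℝ) (B : Matrix (Fin n) (Fin m) ℝ)
    (Φx : ℕ → Matrix (Fin n) (Fin n) ℝ) (Φu : ℕ → Matrix (Fin m) (Fin n) ℝ)
    (hΦ1 : Φx 1 = 1)
    (hrec : ∀ i, 1 ≤ i → i ≤ N - 1 → Φx (i + 1) = A * Φx i + B * Φu i) :
    (1 - blockShift (N := N) A) * blockToeplitz Φx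
      - blockShift (N := N) B * blockToeplitz Φu = 1 := by
  rw [sub_mul, one_mul]
  ext ⟨i, p⟩ ⟨j, q⟩
  simp only [Matrix.sub_apply, shift_mul_toeplitz, blockToeplitz, Matrix.one_apply]
  erw [shift_mul_toeplitz B Φu i j p q]
  rcases lt_trichotomy i.val j.val with h | h | h
  · rw [if_neg (by omega), if_neg (by omega), if_neg (by omega),
      if_neg (by rintro ⟨rfl, rfl⟩; omega)]
    ring
  · rw [if_pos (by omega), if_neg (by omega), if_neg (by omega)]
    have : i.val - j.val + 1 = 1 := by omega
    rw [this, hΦ1]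
    have hij : i = j := Fin.ext h
    subst hij
    by_cases hpq : p = q
    · subst hpq; simp [Matrix.one_apply]
    · rw [Matrix.one_apply_ne hpq, if_neg (by simp [hpq])]
      ring
  · rw [if_pos (by omega), if_pos (by omega), if_pos (by omega),
      if_neg (by rintro ⟨rfl, rfl⟩; omega)]
    have h1 : 1 ≤ i.val - j.val := by omega
    have h2 : i.val - j.val ≤ N - 1 := by
      have := i.isLt; omega
    rw [hrec _ h1 h2]
    simp [Matrix.add_apply]
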